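/- For every σ ∈ S_n, Inv(σ) = ⟨A(σ)⟩; that is, the inversion set of σ equals the induced set of its A-code. -/

import Mathlib

open scoped Classical

namespace SortIdx

variable {n : ℕ}

noncomputable section

/-- The inversion number `inv σ := #{(i,j) : i < j ∧ σ i > σ j}`. -/
def inv (σ : Equiv.Perm (Fin n)) : ℕ :=
  (Finset.univ.filter (fun p : Fin n × Fin n => p.1 < p.2 ∧ σ p.2 < σ p.1)).card

/-- The inversion set `Inv σ := {(i,j) : i < j ∧ σ i > σ j}`. -/
def InvSet (σ : Equiv.Perm (Fin n)) : Finset (Fin n × Fin n) :=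
  Finset.univ.filter (fun p : Fin n × Fin n => p.1 < p.2 ∧ σ p.2 < σ p.1)

/-- Right-to-left minimum letters. -/
def RmilSet (σ : Equiv.Perm (Fin n)) : Finset (Fin n) :=
  (Finset.univ.filter (fun i => ∀ j, i < j → σ i < σ j)).image σ

/-- The number of right-to-left minima. -/
def rmin (σ : Equiv.Perm (Fin n)) : ℕ := (RmilSet σ).card

/-- Right-to-left minimum places. -/
def RmipSet (σ : Equiv.Perm (Fin n)) : Finset (Fin n) :=
  Finset.univ.filter (fun i => ∀ j, i < j → σ i < σ j)

/-- Right-to-left maximum letters. -/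
def RmalSet (σ : Equiv.Perm (Fin n)) : Finset (Fin n) :=
  (Finset.univ.filter (fun i => ∀ j, i < j → σ j < σ i)).image σ

/-- The number of right-to-left maxima. -/
def rmax (σ : Equiv.Perm (Fin n)) : ℕ := (RmalSet σ).card

/-- Left-to-right minimum letters. -/
def LmilSet (σ : Equiv.Perm (Fin n)) : Finset (Fin n) :=
  (Finset.univ.filter (fun i => ∀ j, j < i → σ i < σ j)).image σ

/-- The number of left-to-right minima. -/
def lmin (σ : Equiv.Perm (Fin n)) : ℕ := (LmilSet σ).card

/-- Left-to-right minimum places. -/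
def LmipSet (σ : Equiv.Perm (Fin n)) : Finset (Fin n) :=
  Finset.univ.filter (fun i => ∀ j, j < i → σ i < σ j)

/-- Left-to-right maximum letters. -/
def LmalSet (σ : Equiv.Perm (Fin n)) : Finset (Fin n) :=
  (Finset.univ.filter (fun i => ∀ j, j < i → σ j < σ i)).image σ

/-- The number of left-to-right maxima. -/
def lmax (σ : Equiv.Perm (Fin n)) : ℕ := (LmalSet σ).card

/-- Left-to-right maximum places. -/
def LmapSet (σ : Equiv.Perm (Fin n)) : Finset (Fin n) :=
  Finset.univ.filter (fun i => ∀ j, j < i → σ j < σ i)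

/-- `Cyc σ`: the set of smallest elements of the cycles of `σ`
(`i` is smallest in its cycle iff `i ≤ σ^k i` for all `k`). -/
def CycSet (σ : Equiv.Perm (Fin n)) : Finset (Fin n) :=
  Finset.univ.filter (fun i => ∀ k : ℕ, i ≤ (σ ^ k) i)

/-- The number of cycles of `σ` (fixed points included). -/
def cyc (σ : Equiv.Perm (Fin n)) : ℕ := (CycSet σ).card

/-- One step of the sorting process computing the sorting index: repeatedly
put the largest not-yet-fixed letter `j` in its place by the transposition
`(i j)` where `i = σ⁻¹ j` is the place of the letter `j`, recording the
distance `j - i`.  This produces the unique factorization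
`σ = (i₁ j₁)(i₂ j₂)⋯(i_k j_k)` with `j₁ < ⋯ < j_k`, `i_r < j_r`, and sums
the `j_r - i_r`.  The fuel `n` is always sufficient. -/
def sorAux : ℕ → Equiv.Perm (Fin n) → ℕ
  | 0, _ => 0
  | (fuel + 1), σ =>
    if h : σ.support.Nonempty then
      (((σ.support.max' h : Fin n) : ℕ) - ((σ⁻¹ (σ.support.max' h) : Fin n) : ℕ)) +
        sorAux fuel (σ * Equiv.swap (σ⁻¹ (σ.support.max' h)) (σ.support.max' h))
    else 0

/-- The sorting index of Petersen. -/
def sor (σ : Equiv.Perm (Fin n)) : ℕ := sorAux n σ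

theorem bcode_exists (σ : Equiv.Perm (Fin n)) (i : Fin n) :
    ∃ k : ℕ, 0 < k ∧ (σ⁻¹ ^ k) i ≤ i := by
  refine ⟨orderOf σ⁻¹, orderOf_pos σ⁻¹, ?_⟩
  rw [pow_orderOf_eq_one]
  simp

/-- The `B`-code of `σ`: `Bcode σ i = σ^(-k) i` where `k ≥ 1` is minimal with
`σ^(-k) i ≤ i`. -/
def Bcode (σ : Equiv.Perm (Fin n)) (i : Fin n) : Fin n :=
  (σ⁻¹ ^ (Nat.find (bcode_exists σ i))) i

/-- The `B`-code as a sequence in `L_n` (1-indexed values: the entry at place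
`i` is the 1-indexed name of the letter `Bcode σ i`). -/
def BcodeNat (σ : Equiv.Perm (Fin n)) : Fin n → ℕ :=
  fun i => ((Bcode σ i : Fin n) : ℕ) + 1

/-- The Lehmer code: `Leh σ i = #{j : j ≤ i ∧ σ j ≤ σ i}` (1-indexed values). -/
def Leh (σ : Equiv.Perm (Fin n)) : Fin n → ℕ :=
  fun i => (Finset.univ.filter (fun j => j ≤ i ∧ σ j ≤ σ i)).card

/-- The `A`-code: `A σ := Leh σ⁻¹`. -/
def Acode (σ : Equiv.Perm (Fin n)) : Fin n → ℕ := Leh σ⁻¹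

/-- `O(code) := {i : code i = 1}` (for `1`-indexed codes in `L_n`). -/
def Oset (code : Fin n → ℕ) : Finset (Fin n) :=
  Finset.univ.filter (fun i => code i = 1)

/-- `Lmic1 σ := O(B σ)`, the set of places where the `B`-code equals `1`,
equivalently the left-to-right minima of the shifted cycle containing `1`. -/
def Lmic1Set (σ : Equiv.Perm (Fin n)) : Finset (Fin n) :=
  Oset (BcodeNat σ)

/-- `lmic1 σ := #{i : (B σ)_i = 1}`. -/
def lmic1 (σ : Equiv.Perm (Fin n)) : ℕ := (Lmic1Set σ).card

/-- The bijection `φ = B⁻¹ ∘ A` of Foata–Han. -/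
def phi (σ : Equiv.Perm (Fin n)) : Equiv.Perm (Fin n) :=
  Function.invFun BcodeNat (Acode σ)

/-- The algorithm computing the induced set of a code: the list argument is
the list of places still to process (from the last to the first), `S` is the
set of letters still available.  At place `i` we pick the `(code i)`-th
smallest element `l` of `S` (1-indexed), put the pairs `(l, j)` for `j ∈ S`,
`j > l` into the answer and remove `l` from `S`. -/
def inducedAux : List (Fin n) → Finset (Fin n) → (Fin n → ℕ) → Finset (Fin n × Fin n)
  | [], _, _ => ∅
  | (i :: is), S, code =>
      ((S.filter (fun j => (S.sort (· ≤ ·)).getD (code i - 1) i < j)).image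
          (fun j => ((S.sort (· ≤ ·)).getD (code i - 1) i, j))) ∪
        inducedAux is (S.erase ((S.sort (· ≤ ·)).getD (code i - 1) i)) code

/-- The induced set `⟨code⟩` of a code in `L_n`. -/
def induced (code : Fin n → ℕ) : Finset (Fin n × Fin n) :=
  inducedAux (List.finRange n).reverse Finset.univ code

/-- The sorting set `Sor σ := ⟨B σ⟩`. -/
def SorSet (σ : Equiv.Perm (Fin n)) : Finset (Fin n × Fin n) :=
  induced (BcodeNat σ)

/-- The descent set (as a set of places `i`, `0`-indexed, such that
`σ i > σ (i+1)`). -/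
def DesSet (σ : Equiv.Perm (Fin n)) : Finset (Fin n) :=
  Finset.univ.filter (fun i => ∃ h : (i : ℕ) + 1 < n, σ ⟨(i : ℕ) + 1, h⟩ < σ i)

/-- The major index (descents being counted `1`-indexed). -/
def maj (σ : Equiv.Perm (Fin n)) : ℕ :=
  ∑ i ∈ DesSet σ, ((i : ℕ) + 1)

/-- The charge `chg σ := ∑_{i ∈ Des σ⁻¹} (n - i)` (descents `1`-indexed). -/
def chg (σ : Equiv.Perm (Fin n)) : ℕ :=
  ∑ i ∈ DesSet σ⁻¹, (n - ((i : ℕ) + 1))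

/-- The reverse-complement of `σ` : `τ i = n + 1 - σ (n + 1 - i)` (1-indexed). -/
def revcomp (σ : Equiv.Perm (Fin n)) : Equiv.Perm (Fin n) :=
  Fin.revPerm * σ * Fin.revPerm

/-- The reverse major index `rmaj σ := maj (revcomp σ)`. -/
def rmaj (σ : Equiv.Perm (Fin n)) : ℕ := maj (revcomp σ)

end

end SortIdx

namespace SortIdxAux

open SortIdx

variable {n : ℕ}

lemma sort_getD_rank {S : Finset (Fin n)} {x : Fin n} (hx : x ∈ S) (d : Fin n) :
    (S.sort (· ≤ ·)).getD ((S.filter (· ≤ x)).card - 1) d = x := by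
  have hmem : x ∈ S.sort (· ≤ ·) := (Finset.mem_sort _).mpr hx
  obtain ⟨⟨k, hk⟩, hkx⟩ := List.mem_iff_get.mp hmem
  have hslt : (S.sort (· ≤ ·)).Pairwise (· < ·) := (Finset.sortedLT_sort S).pairwise
  have hcard : (S.filter (· ≤ x)).card = k + 1 := by
    have hset : S.filter (· ≤ x) = ((S.sort (· ≤ ·)).take (k + 1)).toFinset := by
      ext y
      simp only [Finset.mem_filter, List.mem_toFinset, List.mem_take_iff_getElem]
      constructor
      · rintro ⟨hyS, hyx⟩
        obtain ⟨⟨m, hm⟩, hmy⟩ := List.mem_iff_get.mp ((Finset.mem_sort (α := Fin n) (· ≤ ·)).mpr hyS)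
        refine ⟨m, ?_, by simpa using hmy⟩
        have hmk : m < k + 1 := by
          by_contra hmk
          push_neg at hmk
          have : (S.sort (· ≤ ·)).get ⟨k, hk⟩ < (S.sort (· ≤ ·)).get ⟨m, hm⟩ :=
            hslt.rel_get_of_lt (by simpa using Nat.lt_of_succ_le hmk)
          rw [hkx, hmy] at this
          exact absurd hyx (not_le.mpr this)
        exact lt_min hmk hm
      · rintro ⟨m, hm, rfl⟩
        have hm2 : m < (S.sort (· ≤ ·)).length := lt_of_lt_of_le hm (min_le_right _ _)
        have hmL : (S.sort (· ≤ ·))[m] ∈ S.sort (· ≤ ·) := List.getElem_mem _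
        refine ⟨(Finset.mem_sort _).mp hmL, ?_⟩
        have hmk : m ≤ k := Nat.lt_succ_iff.mp (lt_of_lt_of_le hm (min_le_left _ _))
        rcases eq_or_lt_of_le hmk with h | h
        · subst h
          exact le_of_eq (by rw [← hkx]; rfl)
        · have h2 : (S.sort (· ≤ ·)).get ⟨m, hm2⟩ < (S.sort (· ≤ ·)).get ⟨k, hk⟩ :=
            hslt.rel_get_of_lt (by simpa using h)
          rw [hkx] at h2
          exact le_of_lt h2
    rw [hset, List.card_toFinset,
      ((Finset.sort_nodup S _).sublist (List.take_sublist _ _)).dedup, List.length_take]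
    omega
  rw [hcard]
  simp only [Nat.add_sub_cancel]
  rw [List.getD_eq_getElem _ _ hk]
  exact hkx

lemma acode_eq_rank (σ : Equiv.Perm (Fin n)) (i : Fin n) :
    Acode σ i = (((Finset.Iic i).image ⇑σ⁻¹).filter (· ≤ σ⁻¹ i)).card := by
  rw [Acode, Leh]
  rw [show ((Finset.Iic i).image ⇑σ⁻¹).filter (· ≤ σ⁻¹ i)
      = (Finset.univ.filter (fun j => j ≤ i ∧ σ⁻¹ j ≤ σ⁻¹ i)).image ⇑σ⁻¹ by
    ext y
    simp only [Finset.mem_filter, Finset.mem_image, Finset.mem_Iic, Finset.mem_univ, true_and]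
    constructor
    · rintro ⟨⟨j, hj, rfl⟩, hy⟩; exact ⟨j, ⟨hj, hy⟩, rfl⟩
    · rintro ⟨j, ⟨hj, hy⟩, rfl⟩; exact ⟨⟨j, hj, rfl⟩, hy⟩]
  rw [Finset.card_image_of_injective _ (Equiv.injective _)]

lemma inducedAux_eq (σ : Equiv.Perm (Fin n)) (l : List (Fin n))
    (hs : l.Pairwise (· > ·)) (hc : ∀ a ∈ l, ∀ b, b ≤ a → b ∈ l) :
    inducedAux l (l.toFinset.image ⇑σ⁻¹) (Acode σ) =
      (InvSet σ).filter (fun p => σ p.1 ∈ l) := by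
  induction l with
  | nil => simp [inducedAux]
  | cons i is ih =>
    have hlt : ∀ a ∈ is, a < i := fun a ha => (List.pairwise_cons.mp hs).1 a ha
    have htF : (i :: is).toFinset = Finset.Iic i := by
      ext b
      simp only [List.toFinset_cons, Finset.mem_insert, List.mem_toFinset, Finset.mem_Iic]
      constructor
      · rintro (rfl | hb)
        · exact le_refl _
        · exact le_of_lt (hlt b hb)
      · intro hb
        rcases eq_or_lt_of_le hb with h | h
        · exact Or.inl h
        · rcases List.mem_cons.mp (hc i List.mem_cons_self b (le_of_lt h)) with h1 | h1
          · exact absurd h1 (ne_of_lt h)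
          · exact Or.inr h1
    have hisF : is.toFinset = Finset.Iio i := by
      ext b
      simp only [List.mem_toFinset, Finset.mem_Iio]
      constructor
      · exact hlt b
      · intro hb
        rcases List.mem_cons.mp (hc i List.mem_cons_self b (le_of_lt hb)) with h1 | h1
        · exact absurd h1 (ne_of_lt hb)
        · exact h1
    have hxS : σ⁻¹ i ∈ (Finset.Iic i).image ⇑σ⁻¹ :=
      Finset.mem_image_of_mem _ (Finset.mem_Iic.mpr (le_refl i))
    have hget : (((Finset.Iic i).image ⇑σ⁻¹).sort (· ≤ ·)).getD (Acode σ i - 1) i = σ⁻¹ i := by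
      rw [acode_eq_rank]
      exact sort_getD_rank hxS i
    rw [inducedAux, htF, hget]
    have herase : ((Finset.Iic i).image ⇑σ⁻¹).erase (σ⁻¹ i) = is.toFinset.image ⇑σ⁻¹ := by
      rw [hisF]
      ext y
      simp only [Finset.mem_erase, Finset.mem_image, Finset.mem_Iic, Finset.mem_Iio]
      constructor
      · rintro ⟨hne, j, hj, rfl⟩
        exact ⟨j, lt_of_le_of_ne hj (fun h => hne (by rw [h])), rfl⟩
      · rintro ⟨j, hj, rfl⟩
        exact ⟨fun h => absurd ((Equiv.injective σ⁻¹) h) (ne_of_lt hj), j, le_of_lt hj, rfl⟩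
    rw [herase, ih hs.of_cons
      (fun a ha b hb => by
        rcases List.mem_cons.mp (hc a (List.mem_cons_of_mem _ ha) b hb) with h | h
        · exfalso
          have hbi : b < i := lt_of_le_of_lt hb (hlt a ha)
          rw [h] at hbi
          exact lt_irrefl i hbi
        · exact h)]
    have hfirst : (((Finset.Iic i).image ⇑σ⁻¹).filter (fun j => σ⁻¹ i < j)).image
          (fun j => (σ⁻¹ i, j)) = (InvSet σ).filter (fun p => σ p.1 = i) := by
      ext ⟨p, q⟩
      simp only [Finset.mem_image, Finset.mem_filter, Finset.mem_Iic, InvSet, Finset.mem_univ,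
        true_and, Prod.mk.injEq]
      constructor
      · rintro ⟨j, ⟨⟨m, hm, rfl⟩, hj⟩, rfl, rfl⟩
        refine ⟨⟨hj, ?_⟩, by simp⟩
        simp only [Equiv.Perm.inv_def, Equiv.apply_symm_apply]
        refine lt_of_le_of_ne hm ?_
        intro h
        subst h
        exact absurd rfl (ne_of_gt hj)
      · rintro ⟨⟨hpq, hinv⟩, hp⟩
        refine ⟨q, ⟨⟨σ q, le_of_lt (hp ▸ hinv), by simp⟩, ?_⟩, ?_, rfl⟩
        · rwa [show σ⁻¹ i = p by rw [← hp]; simp]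
        · rw [← hp]; simp
    rw [hfirst, ← Finset.filter_or]
    congr 1
    ext p
    simp [List.mem_cons]

end SortIdxAux

/-- Proposition 2.4.  `Inv σ = ⟨A σ⟩`: the inversion set of
`σ` is the induced set of its `A`-code. -/
theorem invSet_eq_induced_acode (n : ℕ) (σ : Equiv.Perm (Fin n)) :
    SortIdx.InvSet σ = SortIdx.induced (SortIdx.Acode σ) := by
  rw [SortIdx.induced]
  have h0 : (List.finRange n).reverse.toFinset = (Finset.univ : Finset (Fin n)) := by
    ext a; simp
  have h1 : (Finset.univ : Finset (Fin n)) =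
      ((List.finRange n).reverse.toFinset.image ⇑σ⁻¹) := by
    rw [h0]
    ext y
    simp only [Finset.mem_image, Finset.mem_univ, true_iff]
    exact ⟨σ y, trivial, by simp⟩
  rw [h1, SortIdxAux.inducedAux_eq σ _ ?_ ?_]
  · ext p
    simp [SortIdx.InvSet]
  · rw [List.pairwise_reverse]
    exact List.pairwise_lt_finRange n
  · intro a _ b _
    simp
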